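/- If K is a convex body in ℝⁿ whose centroid is the origin, then K ⊆ -nK. -/

import Mathlib

open MeasureTheory Pointwise

open Set in
/-- Key estimate: if `ℓ < s` on a compact convex `K` with `p ∈ K`, then
`∫_K (ℓ x - ℓ p) ≤ vol K * (s - ℓ p) * n/(n+1)`. -/
theorem centroid_aux {n : ℕ} (K : Set (EuclideanSpace ℝ (Fin n)))
    (hK : IsCompact K) (hKc : Convex ℝ K) (p : EuclideanSpace ℝ (Fin n)) (hp : p ∈ K)
    (ℓ : EuclideanSpace ℝ (Fin n) →L[ℝ] ℝ) (s : ℝ) (hs1 : ∀ x ∈ K, ℓ x < s) :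
    ∫ x in K, (ℓ x - ℓ p) ≤ (volume K).toReal * ((s - ℓ p) * n / (n + 1)) := by
  set c : ℝ := s - ℓ p with hc
  have hcpos : (0:ℝ) < c := by have := hs1 p hp; simp only [hc]; linarith
  set Vr : ℝ := (volume K).toReal with hVr
  have hVlt : volume K < ⊤ := hK.measure_lt_top
  have hVrnn : 0 ≤ Vr := ENNReal.toReal_nonneg
  set f : EuclideanSpace ℝ (Fin n) → ℝ := fun x => max (ℓ x - ℓ p) 0 with hf
  have hfc : Continuous f := (ℓ.continuous.sub continuous_const).max continuous_const
  have hIntf : IntegrableOn f K volume :=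
    hfc.continuousOn.integrableOn_compact hK
  have hIntL : IntegrableOn (fun x => ℓ x - ℓ p) K volume :=
    (ℓ.continuous.sub continuous_const).continuousOn.integrableOn_compact hK
  have step1 : ∫ x in K, (ℓ x - ℓ p) ≤ ∫ x in K, f x :=
    integral_mono hIntL hIntf fun x => le_max_left _ _
  -- layer cake
  have hlc : ∫ x in K, f x
      = ∫ t in Ioi (0:ℝ), ((volume.restrict K) {a | t < f a}).toReal :=
    hIntf.integral_eq_integral_meas_lt (Filter.Eventually.of_forall fun x => le_max_right _ _)
  -- the bound function
  set B : ℝ → ℝ := (Ioc (0:ℝ) c).indicator (fun t => Vr * (1 - (t / c) ^ n)) with hB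
  have hBint : Integrable B volume := by
    rw [hB, integrable_indicator_iff measurableSet_Ioc]
    exact ((continuous_const.mul (continuous_const.sub
      ((continuous_id.div_const c).pow n))).continuousOn.integrableOn_compact
        isCompact_Icc).mono_set Ioc_subset_Icc_self
  have hKm : MeasurableSet K := hK.isClosed.measurableSet
  have hbound : ∀ t ∈ Ioi (0:ℝ), ((volume.restrict K) {a | t < f a}).toReal ≤ B t := by
    intro t ht
    have htpos : (0:ℝ) < t := ht
    have hSm : MeasurableSet {a : EuclideanSpace ℝ (Fin n) | t < f a} :=
      (isOpen_lt continuous_const hfc).measurableSet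
    rw [Measure.restrict_apply hSm]
    rcases le_or_gt t c with htc | htc
    · -- t ∈ Ioc 0 c
      have hBt : B t = Vr * (1 - (t / c) ^ n) := by
        rw [hB, indicator_of_mem (Set.mem_Ioc.mpr ⟨htpos, htc⟩)]
      rw [hBt]
      have hrnn : (0:ℝ) ≤ t / c := div_nonneg htpos.le hcpos.le
      have hr1 : t / c ≤ 1 := (div_le_one hcpos).2 htc
      -- the cone
      set D : Set (EuclideanSpace ℝ (Fin n)) := AffineMap.homothety p (t / c) '' K with hD
      have hD1 : D ⊆ K := by
        rintro _ ⟨x, hx, rfl⟩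
        have h1 : AffineMap.homothety p (t / c) x = (t / c) • (x - p) + p := by
          simp [AffineMap.homothety_apply]
        have h2 : (t / c) • (x - p) + p = (1 - t / c) • p + (t / c) • x := by
          module
        rw [h1, h2]
        exact hKc hp hx (by linarith) hrnn (by ring)
      have hD2 : D ⊆ {a | f a ≤ t} := by
        rintro _ ⟨x, hx, rfl⟩
        have hval : ℓ (AffineMap.homothety p (t / c) x) - ℓ p = (t / c) * (ℓ x - ℓ p) := by
          have h1 : AffineMap.homothety p (t / c) x = (t / c) • (x - p) + p := by
            simp [AffineMap.homothety_apply]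
          rw [h1, ℓ.map_add, ℓ.map_smul, ℓ.map_sub, smul_eq_mul]
          ring
        have hxc : ℓ x - ℓ p ≤ c := by have := hs1 x hx; linarith
        have : (t / c) * (ℓ x - ℓ p) ≤ t := by
          calc (t / c) * (ℓ x - ℓ p) ≤ (t / c) * c := by
                exact mul_le_mul_of_nonneg_left hxc hrnn
            _ = t := by field_simp
        simp only [Set.mem_setOf_eq, hf, max_le_iff, hval]
        exact ⟨this, htpos.le⟩
      have hDvol : volume D = ENNReal.ofReal ((t / c) ^ n) * volume K := by
        rw [hD, Measure.addHaar_image_homothety, finrank_euclideanSpace_fin,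
          abs_of_nonneg (pow_nonneg hrnn n)]
      -- measure arithmetic
      have hsplit : volume (K ∩ {a | f a ≤ t}) + volume (K \ {a | f a ≤ t}) = volume K :=
        measure_inter_add_diff K (isClosed_le hfc continuous_const).measurableSet
      have hSeq : {a | t < f a} ∩ K = K \ {a | f a ≤ t} := by
        ext a; simp only [Set.mem_inter_iff, Set.mem_setOf_eq, Set.mem_diff, not_le]
        tauto
      have hsub : volume D ≤ volume (K ∩ {a | f a ≤ t}) :=
        measure_mono (Set.subset_inter hD1 hD2)
      have hfin1 : volume (K ∩ {a | f a ≤ t}) ≠ ⊤ :=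
        ((measure_mono Set.inter_subset_left).trans_lt hVlt).ne
      have hfin2 : volume (K \ {a | f a ≤ t}) ≠ ⊤ :=
        ((measure_mono Set.diff_subset).trans_lt hVlt).ne
      have har : (volume (K ∩ {a | f a ≤ t})).toReal + (volume (K \ {a | f a ≤ t})).toReal = Vr := by
        rw [← ENNReal.toReal_add hfin1 hfin2, hsplit]
      have hbr : (t / c) ^ n * Vr ≤ (volume (K ∩ {a | f a ≤ t})).toReal := by
        have := ENNReal.toReal_mono hfin1 (hDvol ▸ hsub)
        rwa [ENNReal.toReal_mul, ENNReal.toReal_ofReal (pow_nonneg hrnn n)] at this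
      rw [hSeq]
      nlinarith [hbr, har]
    · -- t > c : the superlevel set misses K
      have hempty : {a | t < f a} ∩ K = ∅ := by
        ext a
        simp only [Set.mem_inter_iff, Set.mem_setOf_eq, Set.mem_empty_iff_false, iff_false,
          not_and]
        intro hta ha
        have := hs1 a ha
        have : f a ≤ c := by
          simp only [hf, max_le_iff]
          exact ⟨by linarith, hcpos.le⟩
        linarith
      rw [hempty]
      have : B t = 0 := by
        rw [hB, indicator_of_notMem (by simp [Set.mem_Ioc]; intro h; linarith)]
      simp [this]
  -- integrate the bound
  have step2 : ∫ t in Ioi (0:ℝ), ((volume.restrict K) {a | t < f a}).toReal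
      ≤ ∫ t in Ioi (0:ℝ), B t := by
    refine integral_mono_of_nonneg ?_ (hBint.restrict) ?_
    · exact Filter.Eventually.of_forall fun t => ENNReal.toReal_nonneg
    · exact (ae_restrict_iff' measurableSet_Ioi).2 (Filter.Eventually.of_forall hbound)
  have step3 : ∫ t in Ioi (0:ℝ), B t = Vr * (c * n / (n + 1)) := by
    rw [hB, setIntegral_indicator measurableSet_Ioc,
      Set.inter_eq_self_of_subset_right Ioc_subset_Ioi_self,
      ← intervalIntegral.integral_of_le hcpos.le]
    have hrw : ∀ t : ℝ, Vr * (1 - (t / c) ^ n) = Vr - Vr / c ^ n * t ^ n := by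
      intro t
      ring
    simp_rw [hrw]
    rw [intervalIntegral.integral_sub intervalIntegrable_const
        ((intervalIntegral.intervalIntegrable_pow n).const_mul _),
      intervalIntegral.integral_const, intervalIntegral.integral_const_mul,
      integral_pow]
    have hcn : c ^ n ≠ 0 := pow_ne_zero n hcpos.ne'
    have hn1 : (n:ℝ) + 1 ≠ 0 := by positivity
    field_simp
    ring
  calc ∫ x in K, (ℓ x - ℓ p) ≤ ∫ x in K, f x := step1
    _ = ∫ t in Ioi (0:ℝ), ((volume.restrict K) {a | t < f a}).toReal := hlc
    _ ≤ ∫ t in Ioi (0:ℝ), B t := step2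
    _ = Vr * (c * n / (n + 1)) := step3
    _ = Vr * ((s - ℓ p) * n / (n + 1)) := by rw [hc]

/-- If the centroid of a convex body `K ⊆ ℝⁿ` is the origin, then `K ⊆ -nK`. -/
theorem centroid_subset_neg_smul {n : ℕ} (K : Set (EuclideanSpace ℝ (Fin n)))
    (hK : IsCompact K) (hKc : Convex ℝ K) (hKi : (interior K).Nonempty)
    (hcent : ∫ x in K, x = (0 : EuclideanSpace ℝ (Fin n))) :
    K ⊆ (-(n : ℝ)) • K := by
  rcases Nat.eq_zero_or_pos n with hn | hn
  · subst hn
    have hKne : K.Nonempty := hKi.mono interior_subset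
    intro x hx
    have hx0 : x = (0 : EuclideanSpace ℝ (Fin 0)) := by ext i; exact i.elim0
    have h0K : (0 : EuclideanSpace ℝ (Fin 0)) ∈ K := hx0 ▸ hx
    exact ⟨0, h0K, by rw [hx0]; simp⟩
  intro p hp
  have hn' : (0:ℝ) < n := by exact_mod_cast hn
  have hne : (-(n:ℝ)) ≠ 0 := by simp [hn'.ne']
  rw [Set.mem_smul_set_iff_inv_smul_mem₀ hne]
  by_contra hq
  obtain ⟨ℓ, s, hs1, hs2⟩ := geometric_hahn_banach_closed_point hKc hK.isClosed hq
  have hs1' : ∀ x ∈ K, ℓ x < s := hs1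
  have key := centroid_aux K hK hKc p hp ℓ s hs1'
  set Vr : ℝ := (volume K).toReal with hVr
  have hVpos : (0:ℝ) < Vr := by
    refine ENNReal.toReal_pos ?_ hK.measure_lt_top.ne
    exact ((isOpen_interior.measure_pos volume hKi).trans_le
      (measure_mono interior_subset)).ne'
  have hIntId : IntegrableOn (fun x => x) K volume :=
    continuousOn_id.integrableOn_compact hK
  have hIntL : IntegrableOn (fun x => ℓ x) K volume :=
    ℓ.continuous.continuousOn.integrableOn_compact hK
  have hint0 : ∫ x in K, ℓ x = 0 := by
    have h := ContinuousLinearMap.integral_comp_comm ℓ hIntId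
    rw [h, hcent, map_zero]
  have hsplit : ∫ x in K, (ℓ x - ℓ p) = (∫ x in K, ℓ x) - Vr * ℓ p := by
    rw [integral_sub hIntL (integrableOn_const hK.measure_lt_top.ne)]
    rw [setIntegral_const, smul_eq_mul, measureReal_def]
  rw [hsplit, hint0, zero_sub] at key
  -- key : -(Vr * ℓ p) ≤ Vr * ((s - ℓ p) * n / (n+1))
  have hineq : -(ℓ p) ≤ (s - ℓ p) * n / (n + 1) := by
    have h := key
    nlinarith [hVpos]
  have hq2 : s < (-(n:ℝ))⁻¹ * ℓ p := by
    have := hs2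
    rwa [ContinuousLinearMap.map_smul, smul_eq_mul] at this
  have hlast : (n:ℝ) * s < -(ℓ p) := by
    have h := mul_lt_mul_of_pos_left hq2 hn'
    have hsimp : (n:ℝ) * ((-(n:ℝ))⁻¹ * ℓ p) = -(ℓ p) := by
      rw [inv_neg, ← mul_assoc, mul_neg, mul_inv_cancel₀ hn'.ne']
      ring
    rwa [hsimp] at h
  have hn1 : (0:ℝ) < (n:ℝ) + 1 := by linarith
  rw [le_div_iff₀ hn1] at hineq
  nlinarith [hineq, hlast, hn']
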